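/- For every bit vector a ∈ {0,1}ⁿ and every node m ∈ {1,…,2n−1}, letting Leaves(m) be the set of leaf descendants of m in the heap-indexed binary tree and d = |Leaves(m)|, the image of T_a under the projection onto the m-th coordinate is exactly the open interval centered at ∑_{ℓ ∈ Leaves(m)} a_{ℓ−n+1} s_{ℓ−n+1} of radius (2d − 1)/(4n). In particular, taking m = 1 (the root, with d = n), the projection is the open interval (S(a) − (2n−1)/(4n), S(a) + (2n−1)/(4n)), which is contained in (S(a) − 1/2, S(a) + 1/2). -/

import Mathlib

open MeasureTheory
open scoped ENNReal

noncomputable section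

/-- The value `a_{m−n+1} s_{m−n+1}` carried by a leaf of the heap-indexed binary tree
(0-based: index `j` is a leaf when `n − 1 ≤ j`, carrying `s_{j−(n−1)}`); the value is `0`
on internal nodes. -/
def leafWeight (n : ℕ) (s : Fin n → ℕ) (a : Fin n → Bool) (j : Fin (2 * n - 1)) : ℝ :=
  if _ : n - 1 ≤ (j : ℕ) then
    (if a ⟨(j : ℕ) - (n - 1), by have := j.isLt; omega⟩ then
      (s ⟨(j : ℕ) - (n - 1), by have := j.isLt; omega⟩ : ℝ) else 0)
  else 0

/-- The tree region `T_a ⊆ ℝ^{2n−1}` : coordinates are indexed in heap order (0-based: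
node `j` is internal when `j < n − 1`, with children `2j+1` and `2j+2`; the nodes
`n − 1 ≤ j` are leaves). A point `x` lies in `T_a` iff for every leaf `j`,
`a_j s_j − 1/(4n) < x_j < a_j s_j + 1/(4n)`, and for every internal node `j`,
`x_{2j+1} + x_{2j+2} − 1/(4n) < x_j < x_{2j+1} + x_{2j+2} + 1/(4n)`. -/
def treeRegion (n : ℕ) (s : Fin n → ℕ) (a : Fin n → Bool) : Set (Fin (2 * n - 1) → ℝ) :=
  {x | (∀ j : Fin (2 * n - 1), n - 1 ≤ (j : ℕ) →
          (leafWeight n s a j - 1 / (4 * (n : ℝ)) < x j ∧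
           x j < leafWeight n s a j + 1 / (4 * (n : ℝ)))) ∧
       (∀ j : Fin (2 * n - 1), ∀ h : (j : ℕ) < n - 1,
          (x ⟨2 * (j : ℕ) + 1, by omega⟩ + x ⟨2 * (j : ℕ) + 2, by omega⟩ - 1 / (4 * (n : ℝ))
              < x j ∧
           x j < x ⟨2 * (j : ℕ) + 1, by omega⟩ + x ⟨2 * (j : ℕ) + 2, by omega⟩
              + 1 / (4 * (n : ℝ))))}

namespace TP

/-- characterization of nat division equality -/
lemma divEq {L J b : ℕ} (hb : 0 < b) : L / b = J ↔ J * b ≤ L ∧ L < (J+1)*b := by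
  constructor
  · intro h
    refine ⟨(Nat.le_div_iff_mul_le hb).1 h.ge, ?_⟩
    have : L / b < J + 1 := by omega
    exact (Nat.div_lt_iff_lt_mul hb).1 this |>.trans_eq (by ring)
  · rintro ⟨h1, h2⟩
    have ha : J ≤ L / b := (Nat.le_div_iff_mul_le hb).2 h1
    have hb2 : L / b < J + 1 := (Nat.div_lt_iff_lt_mul hb).2 (h2.trans_eq (by ring))
    omega

lemma div_pow_succ (c t : ℕ) : c / 2^(t+1) = c / 2 / 2^t := by
  rw [Nat.div_div_eq_div_mul, ← pow_succ']

lemma div_pow_le_div_two {t : ℕ} (ht : 1 ≤ t) (c : ℕ) : c / 2^t ≤ c / 2 := by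
  obtain ⟨u, rfl⟩ : ∃ u, t = u + 1 := ⟨t - 1, by omega⟩
  rw [div_pow_succ]; exact Nat.div_le_self _ _

/-- log2 basic bounds -/
lemma log2_le {k M : ℕ} (h1 : 1 ≤ M) (h2 : M < 2^(k+1)) : Nat.log2 M ≤ k := by
  rw [Nat.log2_eq_log_two]
  have := Nat.pow_log_le_self 2 (show M ≠ 0 by omega)
  by_contra h
  have : 2^(k+1) ≤ 2^(Nat.log 2 M) := Nat.pow_le_pow_right (by norm_num) (by omega)
  omega

lemma log2_eq {k M : ℕ} (h1 : 2^k ≤ M) (h2 : M < 2^(k+1)) : Nat.log2 M = k := by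
  rw [Nat.log2_eq_log_two]
  exact Nat.log_eq_of_pow_le_of_lt_pow h1 h2

lemma pow_log2_le {M : ℕ} (h : 1 ≤ M) : 2 ^ Nat.log2 M ≤ M := by
  rw [Nat.log2_eq_log_two]; exact Nat.pow_log_le_self 2 (by omega)

lemma lt_pow_log2 (M : ℕ) : M < 2 ^ (Nat.log2 M + 1) := by
  rcases Nat.eq_zero_or_pos M with h | h
  · subst h; simp [Nat.log2]
  · rw [Nat.log2_eq_log_two]; exact Nat.lt_pow_succ_log_self one_lt_two M

lemma log2_two_mul {M : ℕ} (h : 1 ≤ M) : Nat.log2 (2*M) = Nat.log2 M + 1 := by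
  have h1 := pow_log2_le h
  have h2 := lt_pow_log2 M
  exact log2_eq (by rw [pow_succ]; omega) (by rw [pow_succ]; omega)

lemma log2_two_mul_add_one {M : ℕ} (h : 1 ≤ M) : Nat.log2 (2*M+1) = Nat.log2 M + 1 := by
  have h1 := pow_log2_le h
  have h2 := lt_pow_log2 M
  exact log2_eq (by rw [pow_succ]; omega) (by rw [pow_succ, pow_succ]; omega)

/-- uniqueness of the exponent in the descendant relation -/
lemma desc_t_eq {k L J t : ℕ} (hJ : 1 ≤ J) (hL1 : 2^k ≤ L) (hL2 : L < 2^(k+1))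
    (h : L / 2^t = J) : t = k - Nat.log2 J ∧ Nat.log2 J ≤ k := by
  set d := Nat.log2 J with hd
  have h1 : 2^d ≤ J := pow_log2_le hJ
  have h2 : J < 2^(d+1) := lt_pow_log2 J
  have hch := (divEq (Nat.pow_pos (n := t) (by norm_num))).1 h
  have hdl : 2^(d+t) ≤ L := by
    calc 2^(d+t) = 2^d * 2^t := pow_add 2 d t
    _ ≤ J * 2^t := Nat.mul_le_mul_right _ h1
    _ ≤ L := hch.1
  have hdu : L < 2^(d+t+1) := by
    calc L < (J+1) * 2^t := hch.2
    _ ≤ 2^(d+1) * 2^t := Nat.mul_le_mul_right _ h2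
    _ = 2^(d+t+1) := by rw [← pow_add]; ring_nf
  have e1 : d + t ≤ k := by
    by_contra hc
    have : 2^(k+1) ≤ 2^(d+t) := Nat.pow_le_pow_right (by norm_num) (by omega)
    omega
  have e2 : k ≤ d + t := by
    by_contra hc
    have : 2^(d+t+1) ≤ 2^k := Nat.pow_le_pow_right (by norm_num) (by omega)
    omega
  omega

/-- descendant characterization -/
lemma desc_iff {k L J : ℕ} (hJ : 1 ≤ J) (hL1 : 2^k ≤ L) (hL2 : L < 2^(k+1)) :
    (∃ t, L / 2^t = J) ↔
      J * 2^(k - Nat.log2 J) ≤ L ∧ L < (J+1) * 2^(k - Nat.log2 J) := by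
  constructor
  · rintro ⟨t, ht⟩
    obtain ⟨rfl, -⟩ := desc_t_eq hJ hL1 hL2 ht
    exact (divEq (Nat.pow_pos (by norm_num))).1 ht
  · rintro h
    exact ⟨k - Nat.log2 J, (divEq (Nat.pow_pos (by norm_num))).2 h⟩

variable {n : ℕ} (s : Fin n → ℕ) (a : Fin n → Bool)

/-- the weight carried by 1-based index `M` (nonzero only on leaves). -/
def W (n : ℕ) (s : Fin n → ℕ) (a : Fin n → Bool) (M : ℕ) : ℝ :=
  if h : n ≤ M ∧ M < 2 * n then
    (if a ⟨M - n, by omega⟩ then (s ⟨M - n, by omega⟩ : ℝ) else 0) else 0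

/-- height of 1-based index `M` in a tree with leaves at depth `k`. -/
def hgt (k M : ℕ) : ℕ := k - Nat.log2 M

/-- center of node with 1-based index `M` : sum of leaf weights below it. -/
def C (n : ℕ) (s : Fin n → ℕ) (a : Fin n → Bool) (k M : ℕ) : ℝ :=
  ∑ L ∈ Finset.Ico (M * 2 ^ hgt k M) ((M + 1) * 2 ^ hgt k M), W n s a L

lemma hgt_children {k M : ℕ} (h1 : 1 ≤ M) (h2 : M < 2^k) :
    hgt k (2*M) = hgt k M - 1 ∧ hgt k (2*M+1) = hgt k M - 1 ∧ 1 ≤ hgt k M := by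
  have hk : 1 ≤ k := by
    rcases Nat.eq_zero_or_pos k with rfl | h
    · simp at h2; omega
    · exact h
  have hle : Nat.log2 M ≤ k - 1 := log2_le h1 (by
    have : 2^k = 2^(k-1+1) := by congr 1; omega
    omega)
  unfold hgt
  rw [log2_two_mul h1, log2_two_mul_add_one h1]
  omega

lemma C_leaf {k M : ℕ} (h1 : 2^k ≤ M) (h2 : M < 2^(k+1)) :
    C n s a k M = W n s a M := by
  unfold C
  rw [hgt, log2_eq h1 h2, Nat.sub_self, pow_zero, mul_one, mul_one]
  rw [Finset.sum_Ico_eq_sum_range]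
  simp

lemma C_internal {k M : ℕ} (h1 : 1 ≤ M) (h2 : M < 2^k) :
    C n s a k M = C n s a k (2*M) + C n s a k (2*M+1) := by
  obtain ⟨e1, e2, e3⟩ := hgt_children h1 h2
  unfold C
  rw [e1, e2]
  obtain ⟨g, hg⟩ : ∃ g, hgt k M = g + 1 := ⟨hgt k M - 1, by omega⟩
  rw [hg]
  simp only [Nat.add_sub_cancel]
  rw [Finset.sum_Ico_consecutive]
  · congr 1 <;> rw [pow_succ] <;> ring
  · exact Nat.mul_le_mul_right _ (by omega)
  · exact Nat.mul_le_mul_right _ (by omega)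

/-- relating `leafWeight` and `W`. -/
lemma leafWeight_eq_W (hn : 1 ≤ n) (j : Fin (2 * n - 1)) (hj : n - 1 ≤ (j : ℕ)) :
    leafWeight n s a j = W n s a ((j : ℕ) + 1) := by
  have hlt := j.isLt
  unfold leafWeight W
  rw [dif_pos hj, dif_pos (by omega)]
  have : (⟨(j : ℕ) - (n - 1), by omega⟩ : Fin n) = ⟨(j : ℕ) + 1 - n, by omega⟩ := by
    ext; simp; omega
  rw [this]

lemma lemA {k : ℕ} (hn : n = 2^k) (x : Fin (2 * n - 1) → ℝ)
    (hx : x ∈ treeRegion n s a) :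
    ∀ m : ℕ, ∀ j : Fin (2 * n - 1), hgt k ((j : ℕ) + 1) = m →
      |x j - C n s a k ((j : ℕ) + 1)| < (2 * (2:ℝ)^m - 1) / (4 * n) := by
  obtain ⟨hleaf, hint⟩ := hx
  have hn1 : 1 ≤ n := by rw [hn]; exact Nat.one_le_two_pow
  have hn' : (0:ℝ) < 4 * n := by positivity
  intro m
  induction m with
  | zero =>
    intro j hj
    have hlt := j.isLt
    have hJ2 : (j:ℕ) + 1 < 2^(k+1) := by rw [pow_succ]; omega
    have hlog : Nat.log2 ((j:ℕ)+1) = k := by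
      have := log2_le (show 1 ≤ (j:ℕ)+1 by omega) hJ2
      unfold hgt at hj; omega
    have hJ1 : 2^k ≤ (j:ℕ)+1 := by
      have := pow_log2_le (show 1 ≤ (j:ℕ)+1 by omega)
      rw [hlog] at this; exact this
    have hjl : n - 1 ≤ (j:ℕ) := by omega
    obtain ⟨l1, l2⟩ := hleaf j hjl
    rw [leafWeight_eq_W s a hn1 j hjl] at l1 l2
    rw [C_leaf s a hJ1 hJ2, abs_sub_lt_iff]
    have he : (2 * (2:ℝ)^0 - 1)/(4*n) = 1/(4*n) := by norm_num
    rw [he]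
    exact ⟨by linarith, by linarith⟩
  | succ m ih =>
    intro j hj
    have hlt := j.isLt
    have hJ2 : (j:ℕ) + 1 < 2^(k+1) := by rw [pow_succ]; omega
    have hlog : Nat.log2 ((j:ℕ)+1) ≤ k := log2_le (by omega) hJ2
    have hkm : Nat.log2 ((j:ℕ)+1) < k := by unfold hgt at hj; omega
    have hJlt : (j:ℕ) + 1 < 2^k := by
      have h2 := lt_pow_log2 ((j:ℕ)+1)
      have h3 : 2^(Nat.log2 ((j:ℕ)+1) + 1) ≤ 2^k := Nat.pow_le_pow_right (by norm_num) (by omega)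
      omega
    have hjlt : (j:ℕ) < n - 1 := by omega
    obtain ⟨e1, e2, e3⟩ := hgt_children (show 1 ≤ (j:ℕ)+1 by omega) hJlt
    set c1 : Fin (2*n-1) := ⟨2 * (j:ℕ) + 1, by omega⟩ with hc1
    set c2 : Fin (2*n-1) := ⟨2 * (j:ℕ) + 2, by omega⟩ with hc2
    have hg : hgt k ((j:ℕ)+1) = m + 1 := hj
    have i1 : |x c1 - C n s a k ((c1:ℕ) + 1)| < (2 * (2:ℝ)^m - 1) / (4 * n) := by
      apply ih
      show hgt k (2*(j:ℕ)+1+1) = m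
      rw [show 2*(j:ℕ)+1+1 = 2*((j:ℕ)+1) by ring, e1, hg]
      omega
    have i2 : |x c2 - C n s a k ((c2:ℕ) + 1)| < (2 * (2:ℝ)^m - 1) / (4 * n) := by
      apply ih
      show hgt k (2*(j:ℕ)+2+1) = m
      rw [show 2*(j:ℕ)+2+1 = 2*((j:ℕ)+1)+1 by ring, e2, hg]
      omega
    obtain ⟨l1, l2⟩ := hint j hjlt
    have hCrec : C n s a k ((j:ℕ)+1)
        = C n s a k ((c1:ℕ)+1) + C n s a k ((c2:ℕ)+1) := by
      have e4 : (c1:ℕ)+1 = 2*((j:ℕ)+1) := by show 2*(j:ℕ)+1+1 = 2*((j:ℕ)+1); ring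
      have e5 : (c2:ℕ)+1 = 2*((j:ℕ)+1)+1 := by show 2*(j:ℕ)+2+1 = 2*((j:ℕ)+1)+1; ring
      rw [e4, e5, C_internal s a (by omega) hJlt]
    rw [abs_sub_lt_iff] at i1 i2
    obtain ⟨a1, a2⟩ := i1
    obtain ⟨b1, b2⟩ := i2
    have hP : ((2:ℝ) * 2^m - 1)/(4*n) = 2*((2:ℝ)^m/(4*n)) - 1/(4*n) := by ring
    have hQ : ((2:ℝ) * 2^(m+1) - 1)/(4*n) = 4*((2:ℝ)^m/(4*n)) - 1/(4*n) := by
      rw [pow_succ]; ring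
    rw [hP] at a1 a2 b1 b2
    rw [hCrec, abs_sub_lt_iff, hQ]
    have hu : (0:ℝ) < 1/(4*n) := by positivity
    exact ⟨by linarith, by linarith⟩

lemma lemB {k : ℕ} (hn : n = 2^k) (j : Fin (2 * n - 1)) (y : ℝ)
    (hy : |y - C n s a k ((j:ℕ)+1)| < (2 * (2:ℝ)^(hgt k ((j:ℕ)+1)) - 1) / (4 * n)) :
    ∃ x ∈ treeRegion n s a, x j = y := by
  classical
  have hn1 : 1 ≤ n := by rw [hn]; exact Nat.one_le_two_pow
  have hlt := j.isLt
  have hn' : (0:ℝ) < 4*n := by positivity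
  set J := (j:ℕ) + 1 with hJdef
  have hJ1 : 1 ≤ J := by omega
  have hJ2n : J < 2*n := by omega
  set h := hgt k J with hh
  set D : ℝ := 2 * (2:ℝ)^h - 1 with hD
  have hD1 : (1:ℝ) ≤ D := by
    have h1 : (1:ℝ) ≤ (2:ℝ)^h := one_le_pow₀ one_le_two
    rw [hD]; linarith
  have hD0 : (0:ℝ) < D := by linarith
  set e := y - C n s a k J with he
  have hea : |e| < D / (4*n) := hy
  have hkey : |e / D| < 1/(4*n) := by
    rw [abs_div, abs_of_pos hD0, div_lt_iff₀ hD0]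
    calc |e| < D/(4*n) := hea
    _ = 1/(4*n)*D := by ring
  set E : ℕ → ℝ := fun M =>
    if ∃ t, M / 2^t = J then e * (2 * (2:ℝ)^(hgt k M) - 1) / D
    else if ∃ t, J / 2^t = M then e else 0 with hE
  have hEJ : E J = e := by
    simp only [hE]
    rw [if_pos ⟨0, by simp⟩, ← hh, ← hD]
    exact mul_div_cancel_right₀ e hD0.ne'
  -- E is small on leaves
  have hEleaf : ∀ M, n ≤ M → M < 2*n → |E M| < 1/(4*n) := by
    intro M hMn hM2
    by_cases h1 : ∃ t, M / 2^t = J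
    · simp only [hE]
      rw [if_pos h1]
      have hgM : hgt k M = 0 := by
        unfold hgt
        rw [log2_eq (k := k) (by omega) (by rw [pow_succ]; omega)]
        omega
      rw [hgM]
      have hq : e * (2*(2:ℝ)^0 - 1)/D = e / D := by norm_num
      rw [hq]
      exact hkey
    · simp only [hE]
      rw [if_neg h1, if_neg]
      · simpa using (by positivity : (0:ℝ) < 1/(4*n))
      · rintro ⟨t, ht⟩
        rcases Nat.eq_zero_or_pos t with rfl | htp
        · simp only [pow_zero, Nat.div_one] at ht
          exact h1 ⟨0, by simp [ht]⟩
        · have h5 := div_pow_le_div_two htp J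
          have h6 : J / 2 < n := by omega
          omega
  -- the point
  refine ⟨fun m => C n s a k ((m:ℕ)+1) + E ((m:ℕ)+1), ⟨?_, ?_⟩, ?_⟩
  · -- leaf constraints
    intro m hm
    have hm2 := m.isLt
    show leafWeight n s a m - 1/(4*(n:ℝ)) < C n s a k ((m:ℕ)+1) + E ((m:ℕ)+1) ∧
      C n s a k ((m:ℕ)+1) + E ((m:ℕ)+1) < leafWeight n s a m + 1/(4*(n:ℝ))
    rw [leafWeight_eq_W s a hn1 m hm,
      ← C_leaf s a (k := k) (by omega) (by rw [pow_succ]; omega)]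
    have hEm := hEleaf ((m:ℕ)+1) (by omega) (by omega)
    rw [abs_lt] at hEm
    exact ⟨by linarith [hEm.1], by linarith [hEm.2]⟩
  · -- internal constraints
    intro m hm
    have hm2 := m.isLt
    show (C n s a k (2*(m:ℕ)+1+1) + E (2*(m:ℕ)+1+1))
          + (C n s a k (2*(m:ℕ)+2+1) + E (2*(m:ℕ)+2+1)) - 1/(4*(n:ℝ))
        < C n s a k ((m:ℕ)+1) + E ((m:ℕ)+1) ∧
      C n s a k ((m:ℕ)+1) + E ((m:ℕ)+1)
        < (C n s a k (2*(m:ℕ)+1+1) + E (2*(m:ℕ)+1+1))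
          + (C n s a k (2*(m:ℕ)+2+1) + E (2*(m:ℕ)+2+1)) + 1/(4*(n:ℝ))
    rw [show 2*(m:ℕ)+1+1 = 2*((m:ℕ)+1) from by ring]
    set M := (m:ℕ) + 1 with hM
    have hM1 : 1 ≤ M := by omega
    have hMk : M < 2^k := by
      have : M < n := by omega
      omega
    have hCrec : C n s a k M = C n s a k (2*M) + C n s a k (2*M+1) :=
      C_internal s a hM1 hMk
    suffices habs : |E M - E (2*M) - E (2*M+1)| < 1/(4*n) by
      rw [abs_lt] at habs
      exact ⟨by linarith [habs.1, habs.2], by linarith [habs.1, habs.2]⟩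
    obtain ⟨e1, e2, e3⟩ := hgt_children hM1 hMk
    by_cases h1 : ∃ t, M / 2^t = J
    · -- M is a descendant of j : proportional errors
      obtain ⟨t, ht⟩ := h1
      have hc1 : (2*M) / 2^(t+1) = J := by
        rw [div_pow_succ, show (2*M)/2 = M from by omega, ht]
      have hc2 : (2*M+1) / 2^(t+1) = J := by
        rw [div_pow_succ, show (2*M+1)/2 = M from by omega, ht]
      simp only [hE]
      rw [if_pos ⟨t, ht⟩, if_pos ⟨t+1, hc1⟩, if_pos ⟨t+1, hc2⟩]
      obtain ⟨g, hg⟩ : ∃ g, hgt k M = g + 1 := ⟨hgt k M - 1, by omega⟩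
      rw [e1, e2, hg]
      simp only [Nat.add_sub_cancel]
      have hq : e * (2 * (2:ℝ)^(g+1) - 1) / D - e * (2 * (2:ℝ)^g - 1) / D
          - e * (2 * (2:ℝ)^g - 1) / D = e / D := by
        rw [pow_succ]; ring
      rw [hq]
      exact hkey
    · by_cases h2 : ∃ t, J / 2^t = M
      · -- M is a strict ancestor of j
        obtain ⟨t, ht2⟩ := h2
        obtain ⟨u, rfl⟩ : ∃ u, t = u + 1 := by
          rcases Nat.eq_zero_or_pos t with rfl | htp
          · exfalso
            simp only [pow_zero, Nat.div_one] at ht2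
            exact h1 ⟨0, by simp [ht2]⟩
          · exact ⟨t - 1, by omega⟩
        have hcdiv : (J / 2^u) / 2 = M := by
          rw [Nat.div_div_eq_div_mul, ← pow_succ]; exact ht2
        have hMJ : M < J := by
          have h5 : J / 2^(u+1) ≤ J / 2 := div_pow_le_div_two (by omega) J
          have h6 : J / 2 < J := Nat.div_lt_self (by omega) one_lt_two
          omega
        have hcE : E (J / 2^u) = e := by
          rcases Nat.eq_zero_or_pos u with rfl | hu
          · simp only [pow_zero, Nat.div_one]
            exact hEJ
          · have hcJ : J / 2^u < J := by
              have h5 := div_pow_le_div_two hu J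
              have h6 : J / 2 < J := Nat.div_lt_self (by omega) one_lt_two
              omega
            have hnot : ¬ ∃ v, (J / 2^u) / 2^v = J := by
              rintro ⟨v, hv⟩
              have h7 : (J / 2^u) / 2^v ≤ J / 2^u := Nat.div_le_self _ _
              omega
            simp only [hE]
            rw [if_neg hnot, if_pos ⟨u, rfl⟩]
        have hsib : ∀ c', c'/2 = M → c' ≠ J / 2^u → E c' = 0 := by
          intro c' hc' hne
          have hnot1 : ¬ ∃ v, c' / 2^v = J := by
            rintro ⟨v, hv⟩
            rcases Nat.eq_zero_or_pos v with rfl | hvp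
            · simp only [pow_zero, Nat.div_one] at hv
              rcases Nat.eq_zero_or_pos u with rfl | hu
              · exact hne (by simp [hv])
              · have hq2 : J / 2^(u+1) = (J/2) / 2^u := by
                  rw [Nat.div_div_eq_div_mul, ← pow_succ']
                have hq3 : (J/2) = M := by rw [← hv]; exact hc'
                rw [hq2, hq3] at ht2
                have h5 := div_pow_le_div_two hu M
                have h6 : M/2 < M := Nat.div_lt_self (by omega) one_lt_two
                omega
            · obtain ⟨w, rfl⟩ : ∃ w, v = w + 1 := ⟨v - 1, by omega⟩
              have hq2 : c' / 2^(w+1) = M / 2^w := by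
                rw [div_pow_succ, hc']
              rw [hq2] at hv
              have h5 : M / 2^w ≤ M := Nat.div_le_self _ _
              omega
          have hnot2 : ¬ ∃ v, J / 2^v = c' := by
            rintro ⟨v, hv⟩
            have hv1 : J / 2^(v+1) = M := by
              rw [pow_succ, ← Nat.div_div_eq_div_mul, hv, hc']
            have huv : v = u := by
              by_contra hne2
              rcases Nat.lt_or_ge v u with hlt2 | hge
              · have hexp : 2^(v+1) * 2^(u-v) = 2^(u+1) := by
                  rw [← pow_add]; congr 1; omega
                have hq2 : J / 2^(u+1) = (J / 2^(v+1)) / 2^(u-v) := by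
                  rw [Nat.div_div_eq_div_mul, hexp]
                rw [hv1] at hq2
                have h5 := div_pow_le_div_two (t := u-v) (by omega) M
                have h6 : M/2 < M := Nat.div_lt_self (by omega) one_lt_two
                omega
              · have hexp : 2^(u+1) * 2^(v-u-1) = 2^v := by
                  rw [← pow_add]; congr 1; omega
                have hq2 : c' = (J / 2^(u+1)) / 2^(v-u-1) := by
                  rw [← hv, Nat.div_div_eq_div_mul, hexp]
                rw [ht2] at hq2
                have h5 : M / 2^(v-u-1) ≤ M := Nat.div_le_self _ _
                omega
            exact hne (by rw [← hv, huv])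
          simp only [hE]
          rw [if_neg hnot1, if_neg hnot2]
        -- J/2^u is either 2*M or 2*M+1
        have hcc : J / 2^u = 2*M ∨ J / 2^u = 2*M + 1 := by omega
        have hEM : E M = e := by
          simp only [hE]
          rw [if_neg h1, if_pos ⟨u+1, ht2⟩]
        rcases hcc with hcc | hcc
        · rw [hcc] at hcE
          rw [hEM, hcE, hsib (2*M+1) (by omega) (by omega)]
          simpa using (by positivity : (0:ℝ) < 1/(4*n))
        · rw [hcc] at hcE
          rw [hEM, hcE, hsib (2*M) (by omega) (by omega)]
          simpa using (by positivity : (0:ℝ) < 1/(4*n))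
      · -- unrelated node : everything vanishes
        have hzero : ∀ c', c'/2 = M → E c' = 0 := by
          intro c' hc'
          have hnot1 : ¬ ∃ v, c' / 2^v = J := by
            rintro ⟨v, hv⟩
            rcases Nat.eq_zero_or_pos v with rfl | hvp
            · simp only [pow_zero, Nat.div_one] at hv
              refine h2 ⟨1, ?_⟩
              rw [pow_one, ← hv, hc']
            · obtain ⟨w, rfl⟩ : ∃ w, v = w + 1 := ⟨v - 1, by omega⟩
              rw [div_pow_succ, hc'] at hv
              exact h1 ⟨w, hv⟩
          have hnot2 : ¬ ∃ v, J / 2^v = c' := by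
            rintro ⟨v, hv⟩
            exact h2 ⟨v+1, by rw [pow_succ, ← Nat.div_div_eq_div_mul, hv, hc']⟩
          simp only [hE]
          rw [if_neg hnot1, if_neg hnot2]
        have hEM : E M = 0 := by
          simp only [hE]
          rw [if_neg h1, if_neg h2]
        rw [hEM, hzero (2*M) (by omega), hzero (2*M+1) (by omega)]
        simpa using (by positivity : (0:ℝ) < 1/(4*n))
  · -- value at j
    show C n s a k ((j:ℕ)+1) + E ((j:ℕ)+1) = y
    rw [← hJdef, hEJ, he]
    ring

lemma proj {k : ℕ} (hn : n = 2^k) (j : Fin (2 * n - 1)) :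
    (fun x : Fin (2 * n - 1) → ℝ => x j) '' treeRegion n s a
      = Set.Ioo (C n s a k ((j:ℕ)+1) - (2*(2:ℝ)^(hgt k ((j:ℕ)+1)) - 1)/(4*n))
                (C n s a k ((j:ℕ)+1) + (2*(2:ℝ)^(hgt k ((j:ℕ)+1)) - 1)/(4*n)) := by
  ext y
  simp only [Set.mem_image, Set.mem_Ioo]
  constructor
  · rintro ⟨x, hx, rfl⟩
    have hb := lemA s a hn x hx (hgt k ((j:ℕ)+1)) j rfl
    rw [abs_sub_lt_iff] at hb
    exact ⟨by linarith [hb.1, hb.2], by linarith [hb.1, hb.2]⟩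
  · rintro ⟨h1, h2⟩
    obtain ⟨x, hx, hxj⟩ := lemB s a hn j y (by rw [abs_sub_lt_iff]; exact ⟨by linarith, by linarith⟩)
    exact ⟨x, hx, hxj⟩

lemma range_bounds {k J : ℕ} (hJ1 : 1 ≤ J) (hJ2 : J < 2^(k+1)) :
    2^k ≤ J * 2^(hgt k J) ∧ (J+1) * 2^(hgt k J) ≤ 2^(k+1) := by
  have hlog := log2_le hJ1 hJ2
  have h1 := pow_log2_le hJ1
  have h2 := lt_pow_log2 J
  unfold hgt
  constructor
  · calc 2^k = 2^(Nat.log2 J) * 2^(k - Nat.log2 J) := by rw [← pow_add]; congr 1; omega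
    _ ≤ J * 2^(k - Nat.log2 J) := Nat.mul_le_mul_right _ h1
  · calc (J+1) * 2^(k - Nat.log2 J) ≤ 2^(Nat.log2 J + 1) * 2^(k - Nat.log2 J) :=
        Nat.mul_le_mul_right _ (by omega)
    _ = 2^(k+1) := by rw [← pow_add]; congr 1; omega

/-- the Finset of leaf descendants of `j`. -/
def leafFinset (n k : ℕ) (j : Fin (2 * n - 1)) : Finset (Fin (2 * n - 1)) :=
  Finset.univ.filter (fun ℓ : Fin (2 * n - 1) =>
    ((j:ℕ)+1) * 2^(hgt k ((j:ℕ)+1)) ≤ (ℓ:ℕ)+1 ∧ (ℓ:ℕ)+1 < (((j:ℕ)+1)+1) * 2^(hgt k ((j:ℕ)+1)))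

lemma leaves_eq {k : ℕ} (hn : n = 2^k) (j : Fin (2 * n - 1)) :
    {ℓ : Fin (2 * n - 1) | n - 1 ≤ (ℓ:ℕ) ∧ ∃ t : ℕ, ((ℓ:ℕ)+1) / 2^t = (j:ℕ)+1}
      = ↑(leafFinset n k j) := by
  have hlt := j.isLt
  have hn1 : 1 ≤ n := by rw [hn]; exact Nat.one_le_two_pow
  have hJ1 : 1 ≤ (j:ℕ)+1 := by omega
  have hJ2 : (j:ℕ)+1 < 2^(k+1) := by rw [pow_succ]; omega
  obtain ⟨hr1, hr2⟩ := range_bounds hJ1 hJ2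
  ext ℓ
  have hl := ℓ.isLt
  simp only [Set.mem_setOf_eq, leafFinset, Finset.coe_filter, Finset.mem_univ, true_and]
  constructor
  · rintro ⟨h1, h2⟩
    have hd := (desc_iff hJ1 (show 2^k ≤ (ℓ:ℕ)+1 by omega) (by rw [pow_succ]; omega)).1 h2
    exact ⟨hd.1, hd.2⟩
  · rintro ⟨h1, h2⟩
    have hlk : 2^k ≤ (ℓ:ℕ)+1 := le_trans hr1 h1
    refine ⟨by omega, ?_⟩
    exact (desc_iff hJ1 hlk (by rw [pow_succ]; omega)).2 ⟨h1, h2⟩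

lemma leafFinset_card {k : ℕ} (hn : n = 2^k) (j : Fin (2 * n - 1)) :
    (leafFinset n k j).card = 2^(hgt k ((j:ℕ)+1)) := by
  have hlt := j.isLt
  have hn1 : 1 ≤ n := by rw [hn]; exact Nat.one_le_two_pow
  have hJ1 : 1 ≤ (j:ℕ)+1 := by omega
  have hJ2 : (j:ℕ)+1 < 2^(k+1) := by rw [pow_succ]; omega
  obtain ⟨hr1, hr2⟩ := range_bounds hJ1 hJ2
  have hc : (leafFinset n k j).card
      = (Finset.Ico (((j:ℕ)+1) * 2^(hgt k ((j:ℕ)+1))) ((((j:ℕ)+1)+1) * 2^(hgt k ((j:ℕ)+1)))).card := by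
    refine Finset.card_nbij (fun ℓ => (ℓ:ℕ)+1) ?_ ?_ ?_
    · intro ℓ hℓ
      simp only [leafFinset, Finset.mem_coe, Finset.mem_filter] at hℓ
      simp only [Finset.coe_Ico, Set.mem_Ico, Finset.mem_Ico]
      exact ⟨hℓ.2.1, by have := hℓ.2.2; omega⟩
    · intro ℓ1 _ ℓ2 _ heq
      simp only [] at heq
      exact Fin.ext (by omega)
    · intro b hb
      simp only [Finset.coe_Ico, Set.mem_Ico] at hb
      obtain ⟨hb1, hb2⟩ := hb
      have hbk : 2^k ≤ b := le_trans hr1 hb1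
      have hbk2 : b < 2^(k+1) := lt_of_lt_of_le hb2 hr2
      rw [pow_succ] at hbk2
      refine ⟨⟨b - 1, by omega⟩, ?_, by show b - 1 + 1 = b; omega⟩
      simp only [Finset.mem_coe, leafFinset, Finset.mem_filter, Finset.mem_univ, true_and]
      show ((j:ℕ)+1) * 2^(hgt k ((j:ℕ)+1)) ≤ (b-1)+1
        ∧ (b-1)+1 < (((j:ℕ)+1)+1) * 2^(hgt k ((j:ℕ)+1))
      omega
  have hmul : (((j:ℕ)+1)+1) * 2^(hgt k ((j:ℕ)+1))
      = ((j:ℕ)+1) * 2^(hgt k ((j:ℕ)+1)) + 2^(hgt k ((j:ℕ)+1)) := by ring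
  rw [hc, hmul, Nat.card_Ico]
  exact Nat.add_sub_cancel_left _ _

lemma leafFinset_sum {k : ℕ} (hn : n = 2^k) (j : Fin (2 * n - 1)) :
    ∑ ℓ ∈ leafFinset n k j, leafWeight n s a ℓ = C n s a k ((j:ℕ)+1) := by
  have hlt := j.isLt
  have hn1 : 1 ≤ n := by rw [hn]; exact Nat.one_le_two_pow
  have hJ1 : 1 ≤ (j:ℕ)+1 := by omega
  have hJ2 : (j:ℕ)+1 < 2^(k+1) := by rw [pow_succ]; omega
  obtain ⟨hr1, hr2⟩ := range_bounds hJ1 hJ2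
  unfold C
  refine Finset.sum_nbij (fun ℓ => (ℓ:ℕ)+1) ?_ ?_ ?_ ?_
  · intro ℓ hℓ
    simp only [leafFinset, Finset.mem_filter] at hℓ
    simp only [Finset.mem_Ico]
    exact ⟨hℓ.2.1, by have := hℓ.2.2; omega⟩
  · intro ℓ1 _ ℓ2 _ heq
    simp only [] at heq
    exact Fin.ext (by omega)
  · intro b hb
    simp only [Finset.coe_Ico, Set.mem_Ico] at hb
    obtain ⟨hb1, hb2⟩ := hb
    have hbk : 2^k ≤ b := le_trans hr1 hb1
    have hbk2 : b < 2^(k+1) := lt_of_lt_of_le hb2 hr2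
    rw [pow_succ] at hbk2
    refine ⟨⟨b - 1, by omega⟩, ?_, by show b - 1 + 1 = b; omega⟩
    simp only [Finset.mem_coe, leafFinset, Finset.mem_filter, Finset.mem_univ, true_and]
    show ((j:ℕ)+1) * 2^(hgt k ((j:ℕ)+1)) ≤ (b-1)+1
      ∧ (b-1)+1 < (((j:ℕ)+1)+1) * 2^(hgt k ((j:ℕ)+1))
    omega
  · intro ℓ hℓ
    simp only [leafFinset, Finset.mem_filter] at hℓ
    have h1 : 2^k ≤ (ℓ:ℕ)+1 := le_trans hr1 hℓ.2.1
    exact leafWeight_eq_W s a hn1 ℓ (by omega)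

lemma hgt_one (k : ℕ) : hgt k 1 = k := by
  unfold hgt
  rw [Nat.log2_eq_log_two, Nat.log_one_right]
  omega

lemma C_one {k : ℕ} (hn : n = 2^k) :
    C n s a k 1 = ((∑ i : Fin n, if a i then s i else 0 : ℕ) : ℝ) := by
  unfold C
  rw [hgt_one, one_mul, show (1+1) * 2^k = 2^k + 2^k from by ring, ← hn]
  rw [Finset.sum_Ico_eq_sum_range]
  rw [show n + n - n = n from by omega]
  push_cast [apply_ite (fun x : ℕ => (x : ℝ))]
  rw [← Fin.sum_univ_eq_sum_range (fun i => W n s a (n + i)) n]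
  apply Finset.sum_congr rfl
  intro i _
  have hi := i.isLt
  unfold W
  rw [dif_pos (by omega)]
  have : (⟨n + (i:ℕ) - n, by omega⟩ : Fin n) = i := by ext; simp
  rw [this]

end TP

/-- for every bit vector `a` and every node `j` of the heap-indexed binary
tree, with `Leaves(j)` the set of leaf descendants of `j` (a leaf `ℓ` is a descendant of
`j` iff, in 1-based heap indexing, `(ℓ+1) / 2^t = j+1` for some `t`) and `d = |Leaves(j)|`,
the projection of `T_a` onto the `j`-th coordinate is exactly the open interval centered
at `∑_{ℓ ∈ Leaves(j)} a_ℓ s_ℓ` with radius `(2d − 1)/(4n)`. In particular for the root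
(with `d = n`) the projection is `(S(a) − (2n−1)/(4n), S(a) + (2n−1)/(4n))`, which is
contained in `(S(a) − 1/2, S(a) + 1/2)`. -/
theorem treeRegion_proj (k : ℕ) (hk : 1 ≤ k) (n : ℕ) (hn : n = 2 ^ k)
    (s : Fin n → ℕ) (hs : ∀ i, 0 < s i) (a : Fin n → Bool) (j : Fin (2 * n - 1)) :
    let Leaves : Set (Fin (2 * n - 1)) :=
      {ℓ | n - 1 ≤ (ℓ : ℕ) ∧ ∃ t : ℕ, ((ℓ : ℕ) + 1) / 2 ^ t = (j : ℕ) + 1}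
    let d : ℕ := Leaves.ncard
    let center : ℝ := ∑ᶠ ℓ ∈ Leaves, leafWeight n s a ℓ
    let Sa : ℕ := ∑ i : Fin n, if a i then s i else 0
    let root : Fin (2 * n - 1) := ⟨0, by have := Nat.one_le_two_pow (n := k); omega⟩
    ((fun x : Fin (2 * n - 1) → ℝ => x j) '' treeRegion n s a =
      Set.Ioo (center - (2 * (d : ℝ) - 1) / (4 * (n : ℝ)))
              (center + (2 * (d : ℝ) - 1) / (4 * (n : ℝ)))) ∧
    ((fun x : Fin (2 * n - 1) → ℝ => x root) '' treeRegion n s a =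
      Set.Ioo ((Sa : ℝ) - (2 * (n : ℝ) - 1) / (4 * (n : ℝ)))
              ((Sa : ℝ) + (2 * (n : ℝ) - 1) / (4 * (n : ℝ)))) ∧
    ((fun x : Fin (2 * n - 1) → ℝ => x root) '' treeRegion n s a ⊆
      Set.Ioo ((Sa : ℝ) - 1 / 2) ((Sa : ℝ) + 1 / 2)) := by
  intro Leaves d center Sa root
  have hn1 : 1 ≤ n := by rw [hn]; exact Nat.one_le_two_pow
  have hn2 : 2 ≤ n := by
    rw [hn]
    calc 2 = 2^1 := (pow_one 2).symm
    _ ≤ 2^k := Nat.pow_le_pow_right (by norm_num) hk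
  have hnR : (1:ℝ) ≤ (n:ℝ) := by exact_mod_cast hn1
  have hL : Leaves = ↑(TP.leafFinset n k j) := TP.leaves_eq hn j
  have hd : d = 2^(TP.hgt k ((j:ℕ)+1)) := by
    show Leaves.ncard = _
    rw [hL, Set.ncard_coe_finset]
    exact TP.leafFinset_card hn j
  have hcenter : center = TP.C n s a k ((j:ℕ)+1) := by
    show (∑ᶠ ℓ ∈ Leaves, leafWeight n s a ℓ) = _
    rw [hL, finsum_mem_coe_finset]
    exact TP.leafFinset_sum s a hn j
  have hrootval : ((root:ℕ)+1) = 1 := rfl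
  have h1 : TP.C n s a k ((root:ℕ)+1) = (Sa:ℝ) := by
    rw [hrootval]
    exact TP.C_one s a hn
  have h2 : TP.hgt k ((root:ℕ)+1) = k := by
    rw [hrootval]
    exact TP.hgt_one k
  have h3 : (2:ℝ)^k = (n:ℝ) := by rw [hn]; push_cast; ring
  have key2 := TP.proj s a hn root
  rw [h1, h2, h3] at key2
  refine ⟨?_, key2, ?_⟩
  · have key := TP.proj s a hn j
    rw [hcenter, hd]
    rw [Nat.cast_pow, Nat.cast_ofNat]
    exact key
  · rw [key2]
    intro z hz
    simp only [Set.mem_Ioo] at hz ⊢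
    have hq : (2*(n:ℝ) - 1)/(4*n) < 1/2 := by
      rw [div_lt_iff₀ (by positivity)]
      linarith
    exact ⟨by linarith [hz.1, hz.2], by linarith [hz.1, hz.2]⟩
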